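/- Let (L₁, …, L_h; w₁, …, w_h) be a vertex hierarchy of height h on the weighted graph G = (V, w₁). Then for every 1 ≤ i ≤ h and all distinct u, v ∈ V_i with w_i u v < ⊤, there exists a walk from u to v in w₁ whose length equals w_i u v; consequently w_i u v ≥ dist_G(u,v). -/

import Mathlib

namespace ISLabel

variable {V : Type*}

/-- Two vertices are adjacent in the weighted graph `w` when they are distinct and
joined by an edge of finite weight. -/
def Adj (w : V → V → ℕ∞) (u v : V) : Prop := u ≠ v ∧ w u v < ⊤

/-- `p` is a walk from `u` to `v` in the weighted graph `w`: a nonempty list of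
vertices starting at `u`, ending at `v`, with consecutive vertices adjacent. -/
def IsWalk (w : V → V → ℕ∞) (u v : V) (p : List V) : Prop :=
  p ≠ [] ∧ p.head? = some u ∧ p.getLast? = some v ∧ p.Chain' (Adj w)

/-- The length of a list of vertices: the sum of `f` over consecutive pairs. -/
def pathLen (f : V → V → ℕ∞) (p : List V) : ℕ∞ :=
  ((p.zip p.tail).map fun e => f e.1 e.2).sum

/-- The distance from `u` to `v` in `w`: the infimum of the lengths of all walks
from `u` to `v` (`⊤` if there is no such walk). -/
noncomputable def wdist (w : V → V → ℕ∞) (u v : V) : ℕ∞ :=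
  ⨅ p : {p : List V // IsWalk w u v p}, pathLen w p.1

/-- `I` is an independent set in `w`. -/
def IsIndep (w : V → V → ℕ∞) (I : Set V) : Prop :=
  ∀ u ∈ I, ∀ v ∈ I, ¬ Adj w u v

/-- `w` is a weighted undirected graph: symmetric, and every off-diagonal value is
either `⊤` (no edge) or a weight `≥ 1`. -/
def IsWGraph (w : V → V → ℕ∞) : Prop :=
  (∀ u v, w u v = w v u) ∧ ∀ u v, u ≠ v → 1 ≤ w u v

/-- `w` is supported on `S`: all weights touching a vertex outside `S` are `⊤`. -/
def SupportedOn (w : V → V → ℕ∞) (S : Set V) : Prop :=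
  ∀ u v, u ∉ S ∨ v ∉ S → w u v = ⊤

/-- `VsetOf L i` is the vertex set `V_i = V ∖ (L₁ ∪ … ∪ L_{i-1})`. -/
def VsetOf (L : ℕ → Set V) (i : ℕ) : Set V := {v | ∀ j, 1 ≤ j → j < i → v ∉ L j}

/-- A vertex hierarchy of height `h ≥ 1` on the weighted graph `w 1`:
pairwise disjoint independent levels `L 1, …, L h` covering `V`, and graphs
`w i` supported on `V_i` obtained by the augmenting-edge construction. -/
structure VertexHierarchy (V : Type*) (h : ℕ) where
  L : ℕ → Set V
  w : ℕ → V → V → ℕ∞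
  h_pos : 1 ≤ h
  wgraph : ∀ i, 1 ≤ i → i ≤ h → IsWGraph (w i)
  disj : ∀ i j, 1 ≤ i → i ≤ h → 1 ≤ j → j ≤ h → i ≠ j → ∀ v, v ∈ L i → v ∉ L j
  cover : ∀ v : V, ∃ i, 1 ≤ i ∧ i ≤ h ∧ v ∈ L i
  supported : ∀ i, 1 ≤ i → i ≤ h → SupportedOn (w i) (VsetOf L i)
  aug : ∀ i, 2 ≤ i → i ≤ h → ∀ u v : V, u ≠ v → u ∈ VsetOf L i → v ∈ VsetOf L i →
    w i u v = min (w (i - 1) u v) (⨅ x ∈ L (i - 1), w (i - 1) u x + w (i - 1) x v)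
  indep : ∀ i, 1 ≤ i → i ≤ h → IsIndep (w i) (L i)

/-- The level `ℓ(v)`: the unique `i` with `1 ≤ i ≤ h` and `v ∈ L i`. -/
noncomputable def level {h : ℕ} (H : VertexHierarchy V h) (v : V) : ℕ :=
  sInf {i | 1 ≤ i ∧ i ≤ h ∧ v ∈ H.L i}

lemma pathLen_cons_cons (f : V → V → ℕ∞) (a b : V) (t : List V) :
    pathLen f (a :: b :: t) = f a b + pathLen f (b :: t) := by
  simp [pathLen]

lemma walk_trans {w : V → V → ℕ∞} {u x v : V} {p q : List V}
    (hp : IsWalk w u x p) (hq : IsWalk w x v q) :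
    ∃ r, IsWalk w u v r ∧ pathLen w r = pathLen w p + pathLen w q := by
  induction p generalizing u with
  | nil => exact absurd rfl hp.1
  | cons a t ih =>
    obtain ⟨-, hh, hl, hc⟩ := hp
    have ha : a = u := by simpa using hh
    subst ha
    cases t with
    | nil =>
      have hax : a = x := by simpa using hl
      subst hax
      exact ⟨q, hq, by simp [pathLen]⟩
    | cons b t' =>
      have hc' := List.isChain_cons_cons.mp hc
      have hwalk' : IsWalk w b x (b :: t') :=
        ⟨by simp, rfl, by simpa [List.getLast?_cons_cons] using hl, hc'.2⟩
      obtain ⟨r, hr, hlen⟩ := ih hwalk'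
      obtain ⟨hne, hrh, hrl, hrc⟩ := hr
      cases r with
      | nil => exact absurd rfl hne
      | cons c r' =>
        have hcb : c = b := by simpa using hrh
        subst hcb
        refine ⟨a :: c :: r',
          ⟨by simp, rfl, by simpa [List.getLast?_cons_cons] using hrl,
            List.isChain_cons_cons.mpr ⟨hc'.1, hrc⟩⟩, ?_⟩
        rw [pathLen_cons_cons, pathLen_cons_cons, hlen, add_assoc]

lemma VsetOf_anti {L : ℕ → Set V} {i j : ℕ} (hij : i ≤ j) {v : V}
    (hv : v ∈ VsetOf L j) : v ∈ VsetOf L i :=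
  fun k hk1 hki => hv k hk1 (lt_of_lt_of_le hki hij)

/-- every (possibly augmenting) edge of `G_i` comes from a walk in
the original graph of the same length; hence its weight dominates the distance. -/
theorem hierarchy_edge_realized [Fintype V] {h : ℕ} (H : VertexHierarchy V h) :
    ∀ i, 1 ≤ i → i ≤ h → ∀ u v : V, u ≠ v →
      u ∈ VsetOf H.L i → v ∈ VsetOf H.L i → H.w i u v < ⊤ →
      (∃ p : List V, IsWalk (H.w 1) u v p ∧ pathLen (H.w 1) p = H.w i u v) ∧
      wdist (H.w 1) u v ≤ H.w i u v := by
  have key : ∀ i, 1 ≤ i → i ≤ h → ∀ u v : V, u ≠ v →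
      u ∈ VsetOf H.L i → v ∈ VsetOf H.L i → H.w i u v < ⊤ →
      ∃ p : List V, IsWalk (H.w 1) u v p ∧ pathLen (H.w 1) p = H.w i u v := by
    intro i hi
    induction i, hi using Nat.le_induction with
    | base =>
      intro _ u v huv hu hv hlt
      refine ⟨[u, v], ⟨by simp, rfl, rfl, List.isChain_pair.mpr ⟨huv, hlt⟩⟩, ?_⟩
      simp [pathLen]
    | succ i hi ih =>
      intro hih u v huv hu hv hlt
      have hih' : i ≤ h := le_trans (Nat.le_succ i) hih
      have haug := H.aug (i + 1) (by omega) hih u v huv hu hv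
      simp only [Nat.add_sub_cancel] at haug
      have hu' : u ∈ VsetOf H.L i := VsetOf_anti (Nat.le_succ i) hu
      have hv' : v ∈ VsetOf H.L i := VsetOf_anti (Nat.le_succ i) hv
      rcases le_total (H.w i u v) (⨅ x ∈ H.L i, H.w i u x + H.w i x v) with hle | hle
      · rw [haug, min_eq_left hle] at hlt ⊢
        exact ih hih' u v huv hu' hv' hlt
      · rw [haug, min_eq_right hle] at hlt ⊢
        set b := ⨅ x ∈ H.L i, H.w i u x + H.w i x v with hb
        -- the infimum is attained
        have hlt1 : b < b + 1 := (ENat.lt_add_one_iff hlt.ne).mpr le_rfl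
        rw [hb] at hlt1
        obtain ⟨x, hx⟩ := iInf_lt_iff.mp (lt_of_le_of_lt (le_of_eq hb.symm) hlt1)
        obtain ⟨hxL, hxlt⟩ := iInf_lt_iff.mp hx
        have hxle : H.w i u x + H.w i x v ≤ b := (ENat.lt_add_one_iff hlt.ne).mp hxlt
        have hble : b ≤ H.w i u x + H.w i x v := iInf₂_le x hxL
        have heq : H.w i u x + H.w i x v = b := le_antisymm hxle hble
        have hsum_lt : H.w i u x + H.w i x v < ⊤ := heq ▸ hlt
        have h1 : H.w i u x < ⊤ := lt_of_le_of_lt le_self_add hsum_lt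
        have h2 : H.w i x v < ⊤ := lt_of_le_of_lt le_add_self hsum_lt
        have hux : u ≠ x := fun h => (hu i hi (Nat.lt_succ_self i)) (h ▸ hxL)
        have hvx : x ≠ v := fun h => (hv i hi (Nat.lt_succ_self i)) (h ▸ hxL)
        have hxV : x ∈ VsetOf H.L i := fun j hj1 hji hxj =>
          H.disj i j hi hih' hj1 (le_trans (le_of_lt hji) hih') (Nat.ne_of_gt hji) x hxL hxj
        obtain ⟨p, hp, hplen⟩ := ih hih' u x hux hu' hxV h1
        obtain ⟨q, hq, hqlen⟩ := ih hih' x v hvx hxV hv' h2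
        obtain ⟨r, hr, hrlen⟩ := walk_trans hp hq
        exact ⟨r, hr, by rw [hrlen, hplen, hqlen, heq]⟩
  intro i hi hih u v huv hu hv hlt
  obtain ⟨p, hp, hplen⟩ := key i hi hih u v huv hu hv hlt
  refine ⟨⟨p, hp, hplen⟩, ?_⟩
  calc wdist (H.w 1) u v ≤ pathLen (H.w 1) p := iInf_le (fun q : {p : List V // IsWalk (H.w 1) u v p} => pathLen (H.w 1) q.1) ⟨p, hp⟩
    _ = H.w i u v := hplen

end ISLabel
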